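/- Let A be an n×n row-stochastic real matrix all of whose entries are strictly positive. Then the all-ones vector 𝟏 is an eigenvector of A with eigenvalue 1, and every complex eigenvalue λ of A with λ ≠ 1 satisfies |λ| < 1; in particular 1 is the unique eigenvalue of A of absolute value one. -/

import Mathlib

open Matrix

/-- A matrix is row-stochastic if all entries are nonnegative and every row
sums to `1`. -/
def RowStochastic {n : ℕ} (A : Matrix (Fin n) (Fin n) ℝ) : Prop :=
  (∀ i j, 0 ≤ A i j) ∧ ∀ i, ∑ j, A i j = 1

lemma gersh14 {n : ℕ} (A : Matrix (Fin n) (Fin n) ℝ)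
    (hA : RowStochastic A) (hpos : ∀ i j, 0 < A i j)
    (lam : ℂ) (x : Fin n → ℂ) (hx : x ≠ 0)
    (heig : (A.map Complex.ofReal) *ᵥ x = lam • x) :
    ∃ a : ℝ, 0 < a ∧ a ≤ 1 ∧ ‖lam - a‖ ≤ 1 - a := by
  obtain ⟨k, hk⟩ := Function.ne_iff.mp hx
  have hne : (Finset.univ : Finset (Fin n)).Nonempty := ⟨k, Finset.mem_univ k⟩
  obtain ⟨i, -, hi⟩ := Finset.exists_max_image Finset.univ (fun j => ‖x j‖) hne
  have hM : 0 < ‖x i‖ := by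
    refine lt_of_lt_of_le ?_ (hi k (Finset.mem_univ k))
    simpa using hk
  set a := A i i with ha
  have hrow := hA.2 i
  have hsum : ∑ j, (A i j : ℂ) * x j = lam * x i := by
    have := congrFun heig i
    simpa [Matrix.mulVec, dotProduct, Matrix.map_apply, Pi.smul_apply,
      smul_eq_mul] using this
  have hsplit : ∑ j ∈ Finset.univ.erase i, (A i j : ℂ) * x j = (lam - a) * x i := by
    have h1 : ∑ j ∈ Finset.univ.erase i, (A i j : ℂ) * x j + (A i i : ℂ) * x i
        = ∑ j, (A i j : ℂ) * x j := Finset.sum_erase_add _ _ (Finset.mem_univ i)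
    rw [hsum] at h1
    have : ∑ j ∈ Finset.univ.erase i, (A i j : ℂ) * x j = lam * x i - (a : ℂ) * x i := by
      linear_combination h1
    rw [this]; ring
  have hrowsplit : ∑ j ∈ Finset.univ.erase i, A i j = 1 - a := by
    have h1 : ∑ j ∈ Finset.univ.erase i, A i j + A i i = ∑ j, A i j :=
      Finset.sum_erase_add _ _ (Finset.mem_univ i)
    rw [hrow] at h1; linarith
  have hbound : ‖lam - a‖ * ‖x i‖ ≤ (1 - a) * ‖x i‖ := by
    calc ‖lam - a‖ * ‖x i‖
        = ‖(lam - a) * x i‖ := (norm_mul _ _).symm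
      _ = ‖∑ j ∈ Finset.univ.erase i, (A i j : ℂ) * x j‖ := by rw [hsplit]
      _ ≤ ∑ j ∈ Finset.univ.erase i, ‖(A i j : ℂ) * x j‖ :=
          norm_sum_le _ _
      _ = ∑ j ∈ Finset.univ.erase i, A i j * ‖x j‖ := by
          refine Finset.sum_congr rfl fun j _ => ?_
          rw [norm_mul, Complex.norm_real, Real.norm_eq_abs, abs_of_pos (hpos i j)]
      _ ≤ ∑ j ∈ Finset.univ.erase i, A i j * ‖x i‖ := by
          refine Finset.sum_le_sum fun j _ => ?_
          exact mul_le_mul_of_nonneg_left (hi j (Finset.mem_univ j)) (hpos i j).le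
      _ = (1 - a) * ‖x i‖ := by rw [← Finset.sum_mul, hrowsplit]
  have hprowbound : a ≤ 1 := by
    have : 0 ≤ ∑ j ∈ Finset.univ.erase i, A i j :=
      Finset.sum_nonneg fun j _ => (hpos i j).le
    linarith [hrowsplit]
  exact ⟨a, hpos i i, hprowbound, le_of_mul_le_mul_right hbound hM⟩

lemma consequence14 (lam : ℂ) (a : ℝ) (ha : 0 < a) (ha1 : a ≤ 1)
    (h : ‖lam - a‖ ≤ 1 - a) :
    ‖lam‖ ≤ 1 ∧ (‖lam‖ = 1 → lam = 1) := by
  constructor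
  · calc ‖lam‖ = ‖(lam - a) + a‖ := by ring_nf
      _ ≤ ‖lam - a‖ + ‖(a : ℂ)‖ := norm_add_le _ _
      _ ≤ (1 - a) + a := by
          refine add_le_add h ?_
          rw [Complex.norm_real, Real.norm_eq_abs, abs_of_pos ha]
      _ = 1 := by ring
  · intro habs
    have hsq : Complex.normSq (lam - a) ≤ (1 - a) ^ 2 := by
      have := sq_le_sq' (by linarith [norm_nonneg (lam - a)]) h
      rwa [Complex.sq_norm] at this
    have hsq1 : lam.re ^ 2 + lam.im ^ 2 = 1 := by
      have h2 : ‖lam‖ ^ 2 = 1 := by rw [habs]; norm_num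
      rw [Complex.sq_norm, Complex.normSq_apply] at h2
      simpa [sq] using h2
    have hre : (lam.re - a) ^ 2 + lam.im ^ 2 ≤ (1 - a) ^ 2 := by
      rw [Complex.normSq_apply] at hsq
      simpa [Complex.sub_re, Complex.sub_im, Complex.ofReal_re, Complex.ofReal_im, sq] using hsq
    have hule : lam.re ≤ 1 := by nlinarith [sq_nonneg lam.im]
    have huge : 1 ≤ lam.re := by nlinarith
    have hre1 : lam.re = 1 := le_antisymm hule huge
    have him : lam.im = 0 := by nlinarith
    exact Complex.ext (by simp [hre1]) (by simp [him])

/-- For a row-stochastic matrix with strictly positive entries, the all-ones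
vector is an eigenvector for the eigenvalue `1`, every complex eigenvalue
`λ ≠ 1` satisfies `|λ| < 1`, and `1` is the unique eigenvalue of absolute
value one. -/
theorem statement14 {n : ℕ} (hn : 0 < n) (A : Matrix (Fin n) (Fin n) ℝ)
    (hA : RowStochastic A) (hpos : ∀ i j, 0 < A i j) :
    ((fun _ => (1 : ℝ)) : Fin n → ℝ) ≠ 0 ∧
    (A *ᵥ (fun _ => (1 : ℝ)) = fun _ => (1 : ℝ)) ∧
    (∀ lam : ℂ, lam ≠ 1 →
      (∃ x : Fin n → ℂ, x ≠ 0 ∧ (A.map Complex.ofReal) *ᵥ x = lam • x) →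
      ‖lam‖ < 1) ∧
    (∀ lam : ℂ,
      (∃ x : Fin n → ℂ, x ≠ 0 ∧ (A.map Complex.ofReal) *ᵥ x = lam • x) →
      ‖lam‖ = 1 → lam = 1) := by
  refine ⟨?_, ?_, ?_, ?_⟩
  · intro h
    have := congrFun h ⟨0, hn⟩
    simp at this
  · funext i
    simpa [Matrix.mulVec, dotProduct] using hA.2 i
  · rintro lam hne ⟨x, hx, heig⟩
    obtain ⟨a, ha, ha1, hb⟩ := gersh14 A hA hpos lam x hx heig
    obtain ⟨h1, h2⟩ := consequence14 lam a ha ha1 hb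
    rcases lt_or_eq_of_le h1 with h | h
    · exact h
    · exact absurd (h2 h) hne
  · rintro lam ⟨x, hx, heig⟩ habs
    obtain ⟨a, ha, ha1, hb⟩ := gersh14 A hA hpos lam x hx heig
    exact (consequence14 lam a ha ha1 hb).2 habs
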